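/- If α →_k β and k ≤ l, then α →_l β; and if β < α < ε₀, then α →_{|β|} β, where |β| is the number of occurrences of ω in the complete Cantor normal form of β (coefficients expanded). -/

import Mathlib

open ONote in
/-- One step along the standard fundamental sequences: `b = a[k]`
(for successor `a`, `a[k]` is the predecessor of `a`). -/
def FundStep (k : ℕ) (a b : ONote) : Prop :=
  a.fundamentalSequence = Sum.inl (some b) ∨
    ∃ f, a.fundamentalSequence = Sum.inr f ∧ b = f k

/-- `a →_k b`: `b` is obtained from `a` by finitely many steps, each taking the
`k`-th member of the fundamental sequence. -/
def StepsTo (k : ℕ) (a b : ONote) : Prop := Relation.ReflTransGen (FundStep k) a b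

/-- the number of occurrences of `ω` in the complete Cantor normal form of an
ordinal notation (coefficients expanded into repeated summands) -/
def omegaCount : ONote → ℕ
  | ONote.zero => 0
  | ONote.oadd e n a => (n : ℕ) * (1 + omegaCount e) + omegaCount a

open ONote Ordinal

lemma fs_zero : (ONote.zero).fundamentalSequence = Sum.inl none := rfl

lemma fs1 (a : ONote) (m : ℕ+) {b : ONote} {f : ℕ → ONote}
    (h : b.fundamentalSequence = Sum.inr f) :
    (oadd a m b).fundamentalSequence = Sum.inr fun i => oadd a m (f i) := by
  rw [fundamentalSequence, h]

lemma fs2 (a : ONote) (m : ℕ+) {b b' : ONote}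
    (h : b.fundamentalSequence = Sum.inl (some b')) :
    (oadd a m b).fundamentalSequence = Sum.inl (some (oadd a m b')) := by
  rw [fundamentalSequence, h]

lemma fs0 (a : ONote) (m : ℕ+) :
    (oadd a m 0).fundamentalSequence =
      (match a.fundamentalSequence, m.natPred with
      | Sum.inl none, 0 => Sum.inl (some ONote.zero)
      | Sum.inl none, Nat.succ m => Sum.inl (some (oadd 0 m.succPNat 0))
      | Sum.inl (some a'), 0 => Sum.inr fun i => oadd a' i.succPNat 0
      | Sum.inl (some a'), Nat.succ m => Sum.inr fun i => oadd a m.succPNat (oadd a' i.succPNat 0)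
      | Sum.inr f, 0 => Sum.inr fun i => oadd (f i) 1 0
      | Sum.inr f, Nat.succ m => Sum.inr fun i => oadd a m.succPNat (oadd (f i) 1 0)
      : Option ONote ⊕ (ℕ → ONote)) := by
  rw [fundamentalSequence]; rfl

lemma fs3 {a : ONote} (m : ℕ+) (ha : a.fundamentalSequence = Sum.inl none)
    (hm : m.natPred = 0) :
    (oadd a m 0).fundamentalSequence = Sum.inl (some 0) := by
  rw [fs0, ha, hm]; rfl

lemma fs4 {a : ONote} (m : ℕ+) {m' : ℕ} (ha : a.fundamentalSequence = Sum.inl none)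
    (hm : m.natPred = m' + 1) :
    (oadd a m 0).fundamentalSequence = Sum.inl (some (oadd 0 m'.succPNat 0)) := by
  rw [fs0, ha, hm]

lemma fs5 {a a' : ONote} (m : ℕ+) (ha : a.fundamentalSequence = Sum.inl (some a'))
    (hm : m.natPred = 0) :
    (oadd a m 0).fundamentalSequence = Sum.inr fun i => oadd a' i.succPNat 0 := by
  rw [fs0, ha, hm]

lemma fs6 {a a' : ONote} (m : ℕ+) {m' : ℕ} (ha : a.fundamentalSequence = Sum.inl (some a'))
    (hm : m.natPred = m' + 1) :
    (oadd a m 0).fundamentalSequence =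
      Sum.inr fun i => oadd a m'.succPNat (oadd a' i.succPNat 0) := by
  rw [fs0, ha, hm]

lemma fs7 {a : ONote} {g : ℕ → ONote} (m : ℕ+) (ha : a.fundamentalSequence = Sum.inr g)
    (hm : m.natPred = 0) :
    (oadd a m 0).fundamentalSequence = Sum.inr fun i => oadd (g i) 1 0 := by
  rw [fs0, ha, hm]

lemma fs8 {a : ONote} {g : ℕ → ONote} (m : ℕ+) {m' : ℕ} (ha : a.fundamentalSequence = Sum.inr g)
    (hm : m.natPred = m' + 1) :
    (oadd a m 0).fundamentalSequence =
      Sum.inr fun i => oadd a m'.succPNat (oadd (g i) 1 0) := by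
  rw [fs0, ha, hm]

lemma zero_prop {α : ONote} (h : α.fundamentalSequence = Sum.inl none) : α = 0 := by
  have := fundamentalSequence_has_prop α; rw [h] at this; exact this

lemma succ_prop {α a' : ONote} (h : α.fundamentalSequence = Sum.inl (some a')) :
    α.repr = Order.succ a'.repr ∧ (α.NF → a'.NF) := by
  have := fundamentalSequence_has_prop α; rw [h] at this; exact this

lemma limit_prop {α : ONote} {f : ℕ → ONote} (h : α.fundamentalSequence = Sum.inr f) :
    Order.IsSuccLimit (α.repr) ∧ (∀ i, f i < f (i + 1) ∧ f i < α ∧ (α.NF → (f i).NF)) ∧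
      ∀ a, a < α.repr → ∃ i, a < (f i).repr := by
  have := fundamentalSequence_has_prop α; rw [h] at this; exact this

lemma seq_repr_mono {α : ONote} {f : ℕ → ONote} (h : α.fundamentalSequence = Sum.inr f)
    {i j : ℕ} (hij : i ≤ j) : (f i).repr ≤ (f j).repr :=
  (strictMono_nat_of_lt_succ (fun n => ((limit_prop h).2.1 n).1)).monotone hij

lemma fundStep_lift {k : ℕ} (a : ONote) (m : ℕ+) {x y : ONote} (h : FundStep k x y) :
    FundStep k (oadd a m x) (oadd a m y) := by
  rcases h with h | ⟨f, hf, rfl⟩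
  · exact Or.inl (fs2 a m h)
  · exact Or.inr ⟨_, fs1 a m hf, rfl⟩

lemma stepsTo_lift {k : ℕ} (a : ONote) (m : ℕ+) {x y : ONote} (h : StepsTo k x y) :
    StepsTo k (oadd a m x) (oadd a m y) :=
  Relation.ReflTransGen.lift (fun z => oadd a m z) (fun _ _ h => fundStep_lift a m h) _ _ h

lemma stepsTo_zero (k : ℕ) (α : ONote) : StepsTo k α 0 := by
  have : ∀ o : Ordinal, ∀ α : ONote, α.repr = o → StepsTo k α 0 := by
    intro o
    induction o using Ordinal.induction with
    | h o IH =>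
      intro α hα
      rcases h : α.fundamentalSequence with (_ | a') | f
      · obtain rfl := zero_prop h; exact Relation.ReflTransGen.refl
      · refine Relation.ReflTransGen.head (Or.inl h) (IH a'.repr ?_ a' rfl)
        rw [← hα, (succ_prop h).1]; exact Order.lt_succ _
      · refine Relation.ReflTransGen.head (Or.inr ⟨f, h, rfl⟩) (IH (f k).repr ?_ _ rfl)
        rw [← hα]; exact ((limit_prop h).2.1 k).2.1
  exact this _ α rfl

lemma steps_decr {l : ℕ} (e : ONote) (n : ℕ+) : StepsTo l (oadd e (n + 1) 0) (oadd e n 0) := by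
  have hm : (n + 1 : ℕ+).natPred = n.natPred + 1 := by
    have h1 := n.natPred_add_one
    have h3 := (n + 1 : ℕ+).natPred_add_one
    have h2 : ((n + 1 : ℕ+) : ℕ) = (n : ℕ) + 1 := rfl
    omega
  rcases he : e.fundamentalSequence with (_ | a') | g
  · obtain rfl := zero_prop he
    refine Relation.ReflTransGen.single (Or.inl ?_)
    rw [fs4 (n + 1) he hm, PNat.succPNat_natPred]
  · refine Relation.ReflTransGen.head (Or.inr ⟨_, fs6 (n + 1) he hm, rfl⟩) ?_
    rw [PNat.succPNat_natPred]
    exact stepsTo_lift e n (stepsTo_zero l _)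
  · refine Relation.ReflTransGen.head (Or.inr ⟨_, fs8 (n + 1) he hm, rfl⟩) ?_
    rw [PNat.succPNat_natPred]
    exact stepsTo_lift e n (stepsTo_zero l _)

lemma steps_coeff {l : ℕ} (e : ONote) {n n' : ℕ+} (h : n' ≤ n) :
    StepsTo l (oadd e n 0) (oadd e n' 0) := by
  have key : ∀ d n0 : ℕ, StepsTo l (oadd e (n0 + d).succPNat 0) (oadd e n0.succPNat 0) := by
    intro d
    induction d with
    | zero => intro n0; exact Relation.ReflTransGen.refl
    | succ d IH =>
      intro n0
      have heq : (n0 + (d + 1)).succPNat = (n0 + d).succPNat + 1 := by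
        apply PNat.coe_inj.1
        rw [PNat.add_coe, PNat.one_coe, Nat.succPNat_coe, Nat.succPNat_coe]
        omega
      rw [heq]
      exact (steps_decr e (n0 + d).succPNat).trans (IH n0)
  have hcoe : (n' : ℕ) ≤ (n : ℕ) := by exact_mod_cast h
  have e1 : (n'.natPred + ((n : ℕ) - (n' : ℕ))).succPNat = n := by
    apply PNat.coe_inj.1
    have h2 := n'.natPred_add_one
    simp [Nat.succPNat]
    omega
  have e2 : n'.natPred.succPNat = n' := PNat.succPNat_natPred n'
  have := key ((n : ℕ) - (n' : ℕ)) n'.natPred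
  rw [e1, e2] at this
  exact this

lemma fundStep_exp {l : ℕ} {x y : ONote} (h : FundStep l x y) :
    StepsTo l (oadd x 1 0) (oadd y 1 0) := by
  rcases h with h | ⟨g, hg, rfl⟩
  · refine Relation.ReflTransGen.head (Or.inr ⟨_, fs5 1 h rfl, rfl⟩) ?_
    exact steps_coeff y (PNat.one_le _)
  · exact Relation.ReflTransGen.single (Or.inr ⟨_, fs7 1 hg rfl, rfl⟩)

lemma stepsTo_exp {l : ℕ} {x y : ONote} (h : StepsTo l x y) :
    StepsTo l (oadd x 1 0) (oadd y 1 0) := by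
  induction h with
  | refl => exact Relation.ReflTransGen.refl
  | tail _ h2 IH => exact IH.trans (fundStep_exp h2)

lemma seq_mono (α : ONote) : ∀ {f : ℕ → ONote}, α.fundamentalSequence = Sum.inr f →
    ∀ {k l : ℕ}, k ≤ l → StepsTo l (f l) (f k) := by
  induction α with
  | zero => intro f h; rw [fs_zero] at h; exact absurd h (by simp)
  | oadd a m b iha ihb =>
    intro f h k l hkl
    rcases hb : b.fundamentalSequence with (_ | b') | fb
    · obtain rfl := zero_prop hb
      rcases ha : a.fundamentalSequence with (_ | a') | g
      · rcases hm : m.natPred with _ | m'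
        · rw [fs3 m ha hm] at h; exact absurd h (by simp)
        · rw [fs4 m ha hm] at h; exact absurd h (by simp)
      · rcases hm : m.natPred with _ | m'
        · rw [fs5 m ha hm] at h
          obtain rfl := (Sum.inr.inj h).symm
          exact steps_coeff a' (by simp [Nat.succPNat, ← PNat.coe_le_coe]; exact Nat.succ_le_succ hkl)
        · rw [fs6 m ha hm] at h
          obtain rfl := (Sum.inr.inj h).symm
          exact stepsTo_lift a _ (steps_coeff a' (by simp [Nat.succPNat, ← PNat.coe_le_coe]; exact Nat.succ_le_succ hkl))
      · rcases hm : m.natPred with _ | m'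
        · rw [fs7 m ha hm] at h
          obtain rfl := (Sum.inr.inj h).symm
          exact stepsTo_exp (iha ha hkl)
        · rw [fs8 m ha hm] at h
          obtain rfl := (Sum.inr.inj h).symm
          exact stepsTo_lift a _ (stepsTo_exp (iha ha hkl))
    · rw [fs2 a m hb] at h; exact absurd h (by simp)
    · rw [fs1 a m hb] at h
      obtain rfl := (Sum.inr.inj h).symm
      exact stepsTo_lift a m (ihb hb hkl)

lemma fundStep_mono {k l : ℕ} {α β : ONote} (h : FundStep k α β) (hkl : k ≤ l) :
    StepsTo l α β := by
  rcases h with h | ⟨f, hf, rfl⟩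
  · exact Relation.ReflTransGen.single (Or.inl h)
  · exact Relation.ReflTransGen.head (Or.inr ⟨f, hf, rfl⟩) (seq_mono α hf hkl)

lemma stepsTo_mono {k l : ℕ} {α β : ONote} (h : StepsTo k α β) (hkl : k ≤ l) :
    StepsTo l α β := by
  induction h with
  | refl => exact Relation.ReflTransGen.refl
  | tail _ h2 IH => exact IH.trans (fundStep_mono h2 hkl)


lemma repr_oadd' (e : ONote) (n : ℕ+) (c : ONote) :
    (oadd e n c).repr = ω ^ e.repr * (n : ℕ) + c.repr := by simp

lemma repr_oadd_succPNat (e : ONote) (k : ℕ) :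
    (oadd e k.succPNat 0).repr = ω ^ e.repr * ((k : Ordinal) + 1) := by
  rw [repr_oadd']
  push_cast [Nat.succPNat_coe]
  simp

lemma repr_lt_succ_coeff {e : ONote} {n : ℕ+} {c : ONote} (h : (oadd e n c).NF) :
    (oadd e n c).repr < ω ^ e.repr * ((n : ℕ) + 1) := by
  rw [repr_oadd', mul_add, mul_one]
  exact (add_lt_add_iff_left _).2 h.snd'.repr_lt

lemma omega_pow_mul_nat_le {A : Ordinal} {p : ℕ} :
    ω ^ A * ((p : Ordinal) + 1) ≤ ω ^ (A + 1) := by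
  rw [opow_add, opow_one]
  exact mul_le_mul_right (le_of_lt (by exact_mod_cast nat_lt_omega0 (p + 1))) _

lemma repr_lt_omega_pow_succ {e : ONote} {n : ℕ+} {c : ONote} (h : (oadd e n c).NF) :
    (oadd e n c).repr < ω ^ (e.repr + 1) :=
  (repr_lt_succ_coeff h).trans_le omega_pow_mul_nat_le

lemma decomp {β : ONote} (hβ : β.NF) {a : ONote} (ha : a.NF) {p : ℕ} (hp : 1 ≤ p)
    (h1 : ω ^ a.repr * (p : Ordinal) < β.repr) (h2 : β.repr < ω ^ a.repr * ((p : Ordinal) + 1)) :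
    ∃ (n : ℕ+) (c : ONote), β = oadd a n c ∧ (n : ℕ) = p ∧ c.NF ∧ c.repr < ω ^ a.repr := by
  cases β with
  | zero => exact absurd h1 (by simp)
  | oadd e n c =>
    have hcw : c.repr < ω ^ e.repr := hβ.snd'.repr_lt
    have low : ω ^ e.repr ≤ (oadd e n c).repr := omega0_le_oadd e n c
    have lown : ω ^ e.repr * (n : ℕ) ≤ (oadd e n c).repr := by
      rw [repr_oadd']; exact le_self_add
    have high : (oadd e n c).repr < ω ^ e.repr * ((n : ℕ) + 1) := repr_lt_succ_coeff hβ
    have high' : (oadd e n c).repr < ω ^ (e.repr + 1) := repr_lt_omega_pow_succ hβ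
    have hEA : e.repr = a.repr := by
      have hub : ω ^ a.repr * ((p : Ordinal) + 1) ≤ ω ^ (a.repr + 1) := omega_pow_mul_nat_le
      have hle1 : e.repr ≤ a.repr := by
        have h3 : ω ^ e.repr < ω ^ (a.repr + 1) := low.trans_lt (h2.trans_le hub)
        have h4 := (opow_lt_opow_iff_right one_lt_omega0).1 h3
        rwa [Ordinal.add_one_eq_succ, Order.lt_succ_iff] at h4
      have hle2 : a.repr ≤ e.repr := by
        have hp1 : (1 : Ordinal) ≤ (p : Ordinal) := by exact_mod_cast hp
        have h5 : ω ^ a.repr ≤ ω ^ a.repr * (p : Ordinal) := by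
          calc ω ^ a.repr = ω ^ a.repr * 1 := (mul_one _).symm
            _ ≤ ω ^ a.repr * (p : Ordinal) := mul_le_mul_right hp1 _
        have h6 : ω ^ a.repr < ω ^ (e.repr + 1) := (h5.trans_lt h1).trans high'
        have h7 := (opow_lt_opow_iff_right one_lt_omega0).1 h6
        rwa [Ordinal.add_one_eq_succ, Order.lt_succ_iff] at h7
      exact le_antisymm hle1 hle2
    haveI := hβ.fst
    haveI := ha
    obtain rfl : e = a := ONote.repr_inj.1 hEA
    have hpos : (0 : Ordinal) < ω ^ e.repr := opow_pos _ omega0_pos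
    rw [hEA] at hpos
    have hn1 : (n : ℕ) < p + 1 := by
      have h8 := (mul_lt_mul_iff_right₀ hpos).1 (lown.trans_lt h2)
      exact_mod_cast h8
    have hn2 : p < (n : ℕ) + 1 := by
      have h9 := (mul_lt_mul_iff_right₀ hpos).1 (h1.trans high)
      exact_mod_cast h9
    exact ⟨n, c, rfl, by omega, hβ.snd, hcw⟩

lemma count_oadd (e : ONote) (n : ℕ+) (c : ONote) :
    omegaCount (oadd e n c) = (n : ℕ) * (1 + omegaCount e) + omegaCount c := rfl

lemma coeff_le_count (e : ONote) (n : ℕ+) (c : ONote) : (n : ℕ) ≤ omegaCount (oadd e n c) := by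
  rw [count_oadd]
  have := Nat.mul_le_mul_left (n : ℕ) (Nat.le_add_right 1 (omegaCount e))
  omega

lemma exp_lt_count (e : ONote) (n : ℕ+) (c : ONote) :
    omegaCount e + 1 ≤ omegaCount (oadd e n c) := by
  rw [count_oadd]
  have h1 := n.one_le
  have h2 : (1 : ℕ) * (1 + omegaCount e) ≤ (n : ℕ) * (1 + omegaCount e) :=
    Nat.mul_le_mul_right _ h1
  omega

lemma tail_le_count (e : ONote) (n : ℕ+) (c : ONote) :
    omegaCount c ≤ omegaCount (oadd e n c) := by
  rw [count_oadd]; omega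

lemma key_le (α : ONote) : α.NF → ∀ {f : ℕ → ONote}, α.fundamentalSequence = Sum.inr f →
    ∀ β : ONote, β.NF → β.repr < α.repr → β.repr ≤ (f (omegaCount β)).repr := by
  induction α with
  | zero => intro _ f h; rw [fs_zero] at h; exact absurd h (by simp)
  | oadd a m b iha ihb =>
    intro hNF f h β hβ hlt
    -- the key statement for `ω ^ a`
    have K1 : ∀ {w : ℕ → ONote}, (oadd a 1 0).fundamentalSequence = Sum.inr w →
        ∀ β : ONote, β.NF → β.repr < ω ^ a.repr → β.repr ≤ (w (omegaCount β)).repr := by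
      intro w hw β hβ hlt
      rcases ha : a.fundamentalSequence with (_ | a') | g
      · rw [fs3 1 ha rfl] at hw; exact absurd hw (by simp)
      · rw [fs5 1 ha rfl] at hw
        have hwk : ∀ i, w i = oadd a' i.succPNat 0 := fun i => (congrFun (Sum.inr.inj hw) i).symm
        cases β with
        | zero => rw [hwk]; simp
        | oadd e n c =>
          rw [hwk, repr_oadd_succPNat]
          have hsp := (succ_prop ha).1
          have hE : e.repr ≤ a'.repr := by
            have h1 : ω ^ e.repr ≤ (oadd e n c).repr := omega0_le_oadd e n c
            have h2 := (opow_lt_opow_iff_right one_lt_omega0).1 (h1.trans_lt hlt)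
            rwa [hsp, Order.lt_succ_iff] at h2
          have hcount : ((n : ℕ) : Ordinal) + 1 ≤ (omegaCount (oadd e n c) : Ordinal) + 1 := by
            have := coeff_le_count e n c
            have : ((n : ℕ) : Ordinal) ≤ (omegaCount (oadd e n c) : Ordinal) := by
              exact_mod_cast this
            exact add_le_add_left this 1
          refine le_of_lt ?_
          calc (oadd e n c).repr < ω ^ e.repr * ((n : ℕ) + 1) := repr_lt_succ_coeff hβ
            _ ≤ ω ^ a'.repr * ((omegaCount (oadd e n c) : Ordinal) + 1) :=
              mul_le_mul' (opow_le_opow_right omega0_pos hE) hcount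
      · rw [fs7 1 ha rfl] at hw
        have hwk : ∀ i, w i = oadd (g i) 1 0 := fun i => (congrFun (Sum.inr.inj hw) i).symm
        cases β with
        | zero => rw [hwk]; simp
        | oadd e n c =>
          rw [hwk]
          have hE : ω ^ e.repr ≤ (oadd e n c).repr := omega0_le_oadd e n c
          have heA : e.repr < a.repr := (opow_lt_opow_iff_right one_lt_omega0).1 (hE.trans_lt hlt)
          have h1 : e.repr ≤ (g (omegaCount e)).repr := iha hNF.fst ha e hβ.fst heA
          have h2 : (g (omegaCount e)).repr < (g (omegaCount e + 1)).repr :=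
            ((limit_prop ha).2.1 _).1
          have h3 : (g (omegaCount e + 1)).repr ≤ (g (omegaCount (oadd e n c))).repr :=
            seq_repr_mono ha (exp_lt_count e n c)
          have h4 : e.repr + 1 ≤ (g (omegaCount (oadd e n c))).repr := by
            have := h1.trans_lt (h2.trans_le h3)
            rwa [Ordinal.add_one_eq_succ, Order.succ_le_iff]
          refine le_of_lt ?_
          calc (oadd e n c).repr < ω ^ (e.repr + 1) := repr_lt_omega_pow_succ hβ
            _ ≤ ω ^ (g (omegaCount (oadd e n c))).repr := opow_le_opow_right omega0_pos h4
            _ ≤ (oadd (g (omegaCount (oadd e n c))) 1 0).repr := by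
                rw [repr_oadd']; simp
    -- main case split
    rcases hb : b.fundamentalSequence with (_ | b') | fb
    · -- b = 0
      obtain rfl := zero_prop hb
      rcases hm : m.natPred with _ | mp
      · -- m = 1
        obtain rfl : m = 1 := by
          have := PNat.succPNat_natPred m
          rw [hm] at this
          exact this.symm
        have hlt' : β.repr < ω ^ a.repr := by
          rw [repr_oadd'] at hlt
          simpa using hlt
        exact K1 h β hβ hlt'
      · -- m ≥ 2
        obtain ⟨w, hw, hfk⟩ : ∃ w, (oadd a 1 0).fundamentalSequence = Sum.inr w ∧
            ∀ i, f i = oadd a mp.succPNat (w i) := by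
          rcases ha : a.fundamentalSequence with (_ | a') | g
          · rw [fs4 m ha hm] at h; exact absurd h (by simp)
          · rw [fs6 m ha hm] at h
            exact ⟨_, fs5 1 ha rfl, fun i => (congrFun (Sum.inr.inj h) i).symm⟩
          · rw [fs8 m ha hm] at h
            exact ⟨_, fs7 1 ha rfl, fun i => (congrFun (Sum.inr.inj h) i).symm⟩
        rw [hfk, repr_oadd']
        rw [Nat.succPNat_coe]
        push_cast
        rcases le_or_gt β.repr (ω ^ a.repr * ((mp : Ordinal) + 1)) with hc | hc
        · exact hc.trans le_self_add
        · have hub : β.repr < ω ^ a.repr * (((mp + 1 : ℕ) : Ordinal) + 1) := by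
            have h2 : β.repr < (oadd a m 0).repr := hlt
            rw [repr_oadd'] at h2
            have hmm : ((m : ℕ) : Ordinal) = ((mp + 1 : ℕ) : Ordinal) + 1 := by
              have := PNat.natPred_add_one m
              rw [hm] at this
              have : (m : ℕ) = mp + 2 := by omega
              rw [this]; push_cast
              rw [add_assoc]; norm_num
            rw [hmm] at h2
            simpa using h2
          have hc' : ω ^ a.repr * ((mp + 1 : ℕ) : Ordinal) < β.repr := by
            push_cast
            exact_mod_cast hc
          obtain ⟨n, c, rfl, hnp, hcNF, hcw⟩ := decomp hβ hNF.fst (by omega) hc' hub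
          have hKc : c.repr ≤ (w (omegaCount c)).repr := K1 hw c hcNF hcw
          have hmono : (w (omegaCount c)).repr ≤ (w (omegaCount (oadd a n c))).repr :=
            seq_repr_mono hw (tail_le_count a n c)
          rw [repr_oadd']
          have hn' : ((n : ℕ) : Ordinal) = (mp : Ordinal) + 1 := by
            rw [hnp]; push_cast; rfl
          rw [hn']
          exact add_le_add_right (hKc.trans hmono) _
    · rw [fs2 a m hb] at h; exact absurd h (by simp)
    · -- b limit
      rw [fs1 a m hb] at h
      have hfk : ∀ i, f i = oadd a m (fb i) := fun i => (congrFun (Sum.inr.inj h) i).symm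
      rw [hfk, repr_oadd']
      rcases le_or_gt β.repr (ω ^ a.repr * (m : ℕ)) with hc | hc
      · exact hc.trans le_self_add
      · have hub : β.repr < ω ^ a.repr * (((m : ℕ) : Ordinal) + 1) :=
          hlt.trans (repr_lt_succ_coeff hNF)
        obtain ⟨n, c, rfl, hnp, hcNF, hcw⟩ := decomp hβ hNF.fst m.one_le hc hub
        have hcb : c.repr < b.repr := by
          have h2 : (oadd a n c).repr < (oadd a m b).repr := hlt
          rw [repr_oadd', repr_oadd', hnp] at h2
          exact (add_lt_add_iff_left _).1 h2
        have hKc : c.repr ≤ (fb (omegaCount c)).repr := ihb hNF.snd hb c hcNF hcb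
        have hmono : (fb (omegaCount c)).repr ≤ (fb (omegaCount (oadd a n c))).repr :=
          seq_repr_mono hb (tail_le_count a n c)
        rw [repr_oadd', hnp]
        exact add_le_add_right (hKc.trans hmono) _

theorem stepsTo_of_lt : ∀ α β : ONote, α.NF → β.NF → β < α → StepsTo (omegaCount β) α β := by
  have main : ∀ o : Ordinal, ∀ α β : ONote, α.repr = o → α.NF → β.NF → β.repr < α.repr →
      StepsTo (omegaCount β) α β := by
    intro o
    induction o using Ordinal.induction with
    | h o IH =>
      intro α β hα hαNF hβNF hlt
      rcases h : α.fundamentalSequence with (_ | a') | f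
      · obtain rfl := zero_prop h
        simp at hlt
      · have hsp := succ_prop h
        have ha'NF := hsp.2 hαNF
        have hle : β.repr ≤ a'.repr := by
          have := hlt
          rw [hsp.1, Order.lt_succ_iff] at this
          exact this
        rcases eq_or_lt_of_le hle with heq | hlt'
        · haveI := hβNF; haveI := ha'NF
          obtain rfl : β = a' := ONote.repr_inj.1 heq
          exact Relation.ReflTransGen.single (Or.inl h)
        · refine Relation.ReflTransGen.head (Or.inl h) ?_
          refine IH a'.repr ?_ a' β rfl ha'NF hβNF hlt'
          rw [← hα, hsp.1]; exact Order.lt_succ _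
      · have hp := limit_prop h
        have hfNF := ((hp.2.1 (omegaCount β)).2.2) hαNF
        have hfle : β.repr ≤ (f (omegaCount β)).repr := key_le α hαNF h β hβNF hlt
        rcases eq_or_lt_of_le hfle with heq | hlt'
        · haveI := hβNF; haveI := hfNF
          have heq' : β = f (omegaCount β) := ONote.repr_inj.1 heq
          exact Relation.ReflTransGen.single (Or.inr ⟨f, h, heq'⟩)
        · refine Relation.ReflTransGen.head (Or.inr ⟨f, h, rfl⟩) ?_
          refine IH (f (omegaCount β)).repr ?_ _ β rfl hfNF hβNF hlt'
          rw [← hα]; exact (hp.2.1 (omegaCount β)).2.1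
  exact fun α β h1 h2 h3 => main α.repr α β rfl h1 h2 h3


/-- **Monotonicity and reachability for `→_k` (Arai).** If `α →_k β` and
`k ≤ l` then `α →_l β`; and if `β < α` then `α →_{|β|} β`, where `|β|` is the
number of `ω`'s in the complete Cantor normal form of `β`. -/
theorem stepsTo_mono_and_stepsTo_of_lt :
    (∀ (k l : ℕ) (α β : ONote), α.NF → β.NF → StepsTo k α β → k ≤ l →
        StepsTo l α β) ∧
      (∀ α β : ONote, α.NF → β.NF → β < α → StepsTo (omegaCount β) α β) := by
  exact ⟨fun k l α β _ _ h hkl => stepsTo_mono h hkl, stepsTo_of_lt⟩
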